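/- Characterization of the kernel of the prolonged symbol of the extended Rapcsák operator: a symmetric trilinear form A on V satisfies A(X, Y, C) = 0 and A(X, P_h Y, J Z) = A(X, P_h Z, J Y) for all X, Y, Z ∈ V if and only if A(X, Y, C) = 0 for all X, Y ∈ V and the arrays (i,j,k) ↦ A(h_i, h_j, v_k) and (i,j,k) ↦ A(h_i, v_j, v_k) are totally symmetric, i.e. invariant under all permutations of the indices (i,j,k) ∈ {1,…,n}³. -/

import Mathlib

set_option synthInstance.maxHeartbeats 1000000
set_option maxHeartbeats 1000000

noncomputable section

/-- The pointwise model `V = (Fin n → ℝ) × (Fin n → ℝ)` of the double tangent space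
`T_x(TM)` for a spray on an `n`-dimensional manifold, in an adapted basis. -/
abbrev V (n : ℕ) : Type := (Fin n → ℝ) × (Fin n → ℝ)

/-- The vertical endomorphism `J (x, y) = (0, x)`. -/
def Jmap (n : ℕ) : V n →ₗ[ℝ] V n where
  toFun p := (0, p.1)
  map_add' a b := by simp
  map_smul' c a := by simp

/-- The horizontal projector `P_h (x, y) = (x, 0)`. -/
def Ph (n : ℕ) : V n →ₗ[ℝ] V n where
  toFun p := (p.1, 0)
  map_add' a b := by simp
  map_smul' c a := by simp

/-- The `j`-th standard basis vector of `Fin n → ℝ`, indexed by `1 ≤ j ≤ n`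
(zero if `j` is out of range). -/
def dlt (n j : ℕ) : Fin n → ℝ := fun i => if (i : ℕ) + 1 = j then 1 else 0

/-- The horizontal basis vector `h_j`, `1 ≤ j ≤ n`. -/
def hvec (n j : ℕ) : V n := (dlt n j, 0)

/-- The vertical basis vector `v_j`, `1 ≤ j ≤ n`. -/
def vvec (n j : ℕ) : V n := (0, dlt n j)

/-- The spray vector `S = h_n`. -/
def Svec (n : ℕ) : V n := hvec n n

/-- The Liouville vector `C = v_n = J S`. -/
def Cvec (n : ℕ) : V n := vvec n n

/-- Bilinear forms on `V n`. -/
abbrev Bil (n : ℕ) := V n →ₗ[ℝ] V n →ₗ[ℝ] ℝ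

/-- Trilinear forms on `V n` (bundled). -/
abbrev Tri (n : ℕ) := V n →ₗ[ℝ] V n →ₗ[ℝ] V n →ₗ[ℝ] ℝ

lemma Phh (n j : ℕ) : Ph n (hvec n j) = hvec n j := rfl
lemma Jh (n j : ℕ) : Jmap n (hvec n j) = vvec n j := rfl

lemma sum_dlt (n : ℕ) (x : Fin n → ℝ) :
    (∑ i : Fin n, x i • dlt n ((i : ℕ) + 1)) = x := by
  funext j
  rw [Finset.sum_apply]
  have : ∀ i : Fin n, (x i • dlt n ((i : ℕ) + 1)) j
      = if j = i then x i else 0 := by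
    intro i
    simp only [Pi.smul_apply, dlt, smul_eq_mul]
    by_cases h : j = i
    · simp [h]
    · have : (j : ℕ) + 1 ≠ (i : ℕ) + 1 := by
        simp [Fin.val_eq_val, h]
      simp [this, h, Fin.val_inj]
  simp [this]

lemma hsum (n : ℕ) (x : Fin n → ℝ) :
    ((x, 0) : V n) = ∑ i : Fin n, x i • hvec n ((i : ℕ) + 1) := by
  have : (∑ i : Fin n, x i • hvec n ((i : ℕ) + 1))
      = ((∑ i : Fin n, x i • dlt n ((i : ℕ) + 1)), 0) := by
    simp [hvec, Prod.ext_iff, Prod.fst_sum, Prod.snd_sum]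
  rw [this, sum_dlt]

lemma vsum (n : ℕ) (x : Fin n → ℝ) :
    ((0, x) : V n) = ∑ i : Fin n, x i • vvec n ((i : ℕ) + 1) := by
  have : (∑ i : Fin n, x i • vvec n ((i : ℕ) + 1))
      = (0, (∑ i : Fin n, x i • dlt n ((i : ℕ) + 1))) := by
    simp [vvec, Prod.ext_iff, Prod.fst_sum, Prod.snd_sum]
  rw [this, sum_dlt]

lemma decompV (n : ℕ) (X : V n) :
    X = (∑ i : Fin n, X.1 i • hvec n ((i : ℕ) + 1))
      + ∑ i : Fin n, X.2 i • vvec n ((i : ℕ) + 1) := by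
  rw [← hsum, ← vsum]
  exact (Prod.fst_add_snd X).symm

/-- Evaluate a linear functional via the basis expansion. -/
lemma eval_lin (n : ℕ) (f : V n →ₗ[ℝ] ℝ) (X : V n) :
    f X = (∑ i : Fin n, X.1 i * f (hvec n ((i : ℕ) + 1)))
      + ∑ i : Fin n, X.2 i * f (vvec n ((i : ℕ) + 1)) := by
  conv_lhs => rw [decompV n X]
  simp [map_sum, smul_eq_mul]

/-- characterization of the kernel of the prolonged symbol of the
extended Rapcsák operator: a symmetric trilinear form `A` satisfies `A(X, Y, C) = 0`
and `A(X, P_h Y, J Z) = A(X, P_h Z, J Y)` iff `A(X, Y, C) = 0` and the arrays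
`(i,j,k) ↦ A(h_i, h_j, v_k)` and `(i,j,k) ↦ A(h_i, v_j, v_k)` are totally
symmetric in `(i, j, k)`. -/
theorem g3P2_characterization (n : ℕ) (hn : 1 ≤ n) (A : Tri n)
    (hsym12 : ∀ X Y Z, A X Y Z = A Y X Z) (hsym23 : ∀ X Y Z, A X Y Z = A X Z Y) :
    ((∀ X Y, A X Y (Cvec n) = 0) ∧
      (∀ X Y Z, A X (Ph n Y) (Jmap n Z) = A X (Ph n Z) (Jmap n Y)))
    ↔
    ((∀ X Y, A X Y (Cvec n) = 0) ∧
      (∀ i j k : ℕ, 1 ≤ i → i ≤ n → 1 ≤ j → j ≤ n → 1 ≤ k → k ≤ n →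
        (A (hvec n i) (hvec n j) (vvec n k) = A (hvec n j) (hvec n i) (vvec n k) ∧
         A (hvec n i) (hvec n j) (vvec n k) = A (hvec n i) (hvec n k) (vvec n j) ∧
         A (hvec n i) (vvec n j) (vvec n k) = A (hvec n j) (vvec n i) (vvec n k) ∧
         A (hvec n i) (vvec n j) (vvec n k) = A (hvec n i) (vvec n k) (vvec n j)))) := by
  constructor
  · rintro ⟨hC, hP⟩
    refine ⟨hC, fun i j k _ _ _ _ _ _ => ?_⟩
    refine ⟨hsym12 _ _ _, ?_, ?_, hsym23 _ _ _⟩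
    · have := hP (hvec n i) (hvec n j) (hvec n k)
      rwa [Phh, Phh, Jh, Jh] at this
    · have h1 := hP (vvec n k) (hvec n i) (hvec n j)
      rw [Phh, Phh, Jh, Jh] at h1
      calc A (hvec n i) (vvec n j) (vvec n k)
          = A (hvec n i) (vvec n k) (vvec n j) := hsym23 _ _ _
        _ = A (vvec n k) (hvec n i) (vvec n j) := hsym12 _ _ _
        _ = A (vvec n k) (hvec n j) (vvec n i) := h1
        _ = A (hvec n j) (vvec n k) (vvec n i) := (hsym12 _ _ _).symm
        _ = A (hvec n j) (vvec n i) (vvec n k) := hsym23 _ _ _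
  · rintro ⟨hC, hB⟩
    refine ⟨hC, ?_⟩
    -- basis-level statements, with Fin-indexing
    have key1 : ∀ a b c : Fin n,
        A (hvec n ((a:ℕ)+1)) (hvec n ((b:ℕ)+1)) (vvec n ((c:ℕ)+1))
          = A (hvec n ((a:ℕ)+1)) (hvec n ((c:ℕ)+1)) (vvec n ((b:ℕ)+1)) := by
      intro a b c
      exact (hB ((a:ℕ)+1) ((b:ℕ)+1) ((c:ℕ)+1)
        (by omega) (by omega) (by omega) (by omega) (by omega) (by omega)).2.1
    have key3 : ∀ a b c : Fin n,
        A (hvec n ((a:ℕ)+1)) (vvec n ((b:ℕ)+1)) (vvec n ((c:ℕ)+1))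
          = A (hvec n ((b:ℕ)+1)) (vvec n ((a:ℕ)+1)) (vvec n ((c:ℕ)+1)) := by
      intro a b c
      exact (hB ((a:ℕ)+1) ((b:ℕ)+1) ((c:ℕ)+1)
        (by omega) (by omega) (by omega) (by omega) (by omega) (by omega)).2.2.1
    have key2 : ∀ a b c : Fin n,
        A (vvec n ((a:ℕ)+1)) (hvec n ((b:ℕ)+1)) (vvec n ((c:ℕ)+1))
          = A (vvec n ((a:ℕ)+1)) (hvec n ((c:ℕ)+1)) (vvec n ((b:ℕ)+1)) := by
      intro a b c
      calc A (vvec n ((a:ℕ)+1)) (hvec n ((b:ℕ)+1)) (vvec n ((c:ℕ)+1))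
          = A (hvec n ((b:ℕ)+1)) (vvec n ((a:ℕ)+1)) (vvec n ((c:ℕ)+1)) := (hsym12 _ _ _).symm
        _ = A (hvec n ((a:ℕ)+1)) (vvec n ((b:ℕ)+1)) (vvec n ((c:ℕ)+1)) := (key3 a b c).symm
        _ = A (hvec n ((a:ℕ)+1)) (vvec n ((c:ℕ)+1)) (vvec n ((b:ℕ)+1)) := hsym23 _ _ _
        _ = A (hvec n ((c:ℕ)+1)) (vvec n ((a:ℕ)+1)) (vvec n ((b:ℕ)+1)) := key3 a c b
        _ = A (vvec n ((a:ℕ)+1)) (hvec n ((c:ℕ)+1)) (vvec n ((b:ℕ)+1)) := hsym12 _ _ _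
    -- extend first argument to arbitrary X
    have keyX : ∀ (X : V n) (b c : Fin n),
        A X (hvec n ((b:ℕ)+1)) (vvec n ((c:ℕ)+1))
          = A X (hvec n ((c:ℕ)+1)) (vvec n ((b:ℕ)+1)) := by
      intro X b c
      have e1 : A X (hvec n ((b:ℕ)+1)) (vvec n ((c:ℕ)+1))
          = (∑ i : Fin n, X.1 i * A (hvec n ((i:ℕ)+1)) (hvec n ((b:ℕ)+1)) (vvec n ((c:ℕ)+1)))
            + ∑ i : Fin n, X.2 i * A (vvec n ((i:ℕ)+1)) (hvec n ((b:ℕ)+1)) (vvec n ((c:ℕ)+1)) :=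
        eval_lin n ((LinearMap.applyₗ (vvec n ((c:ℕ)+1))).comp
          ((LinearMap.applyₗ (hvec n ((b:ℕ)+1))).comp A)) X
      have e2 : A X (hvec n ((c:ℕ)+1)) (vvec n ((b:ℕ)+1))
          = (∑ i : Fin n, X.1 i * A (hvec n ((i:ℕ)+1)) (hvec n ((c:ℕ)+1)) (vvec n ((b:ℕ)+1)))
            + ∑ i : Fin n, X.2 i * A (vvec n ((i:ℕ)+1)) (hvec n ((c:ℕ)+1)) (vvec n ((b:ℕ)+1)) :=
        eval_lin n ((LinearMap.applyₗ (vvec n ((b:ℕ)+1))).comp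
          ((LinearMap.applyₗ (hvec n ((c:ℕ)+1))).comp A)) X
      rw [e1, e2]
      congr 1
      · exact Finset.sum_congr rfl fun a _ => by rw [key1 a b c]
      · exact Finset.sum_congr rfl fun a _ => by rw [key2 a b c]
    intro X Y Z
    have hPY : Ph n Y = ∑ i : Fin n, Y.1 i • hvec n ((i:ℕ)+1) := by
      rw [← hsum]; rfl
    have hPZ : Ph n Z = ∑ i : Fin n, Z.1 i • hvec n ((i:ℕ)+1) := by
      rw [← hsum]; rfl
    have hJY : Jmap n Y = ∑ i : Fin n, Y.1 i • vvec n ((i:ℕ)+1) := by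
      rw [← vsum]; rfl
    have hJZ : Jmap n Z = ∑ i : Fin n, Z.1 i • vvec n ((i:ℕ)+1) := by
      rw [← vsum]; rfl
    rw [hPY, hPZ, hJY, hJZ]
    simp only [map_sum, map_smul, LinearMap.sum_apply, LinearMap.smul_apply, smul_eq_mul]
    simp only [Finset.mul_sum]
    rw [Finset.sum_comm]
    refine Finset.sum_congr rfl fun b _ => Finset.sum_congr rfl fun c _ => ?_
    rw [keyX X b c]; ring
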